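/- Let K be an infinite field, let n ≥ 1, d ≥ 1, and fix a (d+1)^{n}-cage over K, with nodes p_I indexed by I ∈ {1,…,d+1}^n. If P ∈ K[x_0,…,x_n] is homogeneous of degree d and P(p_I) = 0 for every I ∈ {1,…,d+1}^n with ∑_{j=1}^n (I_j − 1) ≤ d (the simplicial set of the (d+1)^{n}-cage), then P is the zero polynomial. -/

import Mathlib

open MvPolynomial

private lemma eval_bind1 {K : Type*} [CommSemiring K] {σ τ : Type*}
    (x : τ → K) (h : σ → MvPolynomial τ K) (φ : MvPolynomial σ K) :
    eval x (bind₁ h φ) = eval (fun i => eval x (h i)) φ := by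
  have h1 : eval x (bind₁ h φ) = eval₂Hom (RingHom.id K) x (bind₁ h φ) := rfl
  rw [h1, eval₂Hom_bind₁]
  rfl

private lemma degree_one_single {σ : Type*} {m : σ →₀ ℕ} (h : m.degree = 1) :
    ∃ i, m = Finsupp.single i 1 := by
  classical
  have hne : m.support.Nonempty := by
    by_contra hs
    rw [Finset.not_nonempty_iff_eq_empty] at hs
    rw [Finsupp.degree_apply, hs] at h
    simp at h
  obtain ⟨i, hi⟩ := hne
  have hmi : 1 ≤ m i := Nat.one_le_iff_ne_zero.mpr (Finsupp.mem_support_iff.mp hi)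
  have hle : m i ≤ m.degree := Finset.single_le_sum (fun _ _ => Nat.zero_le _) hi
  have hmi1 : m i = 1 := le_antisymm (h ▸ hle) hmi
  refine ⟨i, ?_⟩
  have hsupp : m.support = {i} := by
    apply Finset.eq_singleton_iff_unique_mem.mpr
    refine ⟨hi, fun j hj => ?_⟩
    by_contra hji
    have : m i + m j ≤ m.degree := by
      have hsub : ({i, j} : Finset σ) ⊆ m.support := by
        intro x hx; simp at hx; rcases hx with rfl | rfl <;> assumption
      have := Finset.sum_le_sum_of_subset (f := fun x => m x) hsub
      rw [Finset.sum_pair (show i ≠ j from fun h => hji h.symm)] at this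
      simpa [Finsupp.degree_apply] using this
    have hj1 : 1 ≤ m j := Nat.one_le_iff_ne_zero.mpr (Finsupp.mem_support_iff.mp hj)
    omega
  have := (Finsupp.support_eq_singleton.mp hsupp).2
  rwa [hmi1] at this

private lemma linear_form_eq {K σ : Type*} [CommSemiring K] [Fintype σ] [DecidableEq σ]
    {L : MvPolynomial σ K} (hL : L.IsHomogeneous 1) :
    L = ∑ i, MvPolynomial.C (L.coeff (Finsupp.single i 1)) * MvPolynomial.X i := by
  ext m
  rw [coeff_sum]
  by_cases hm : ∃ i, m = Finsupp.single i 1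
  · obtain ⟨i₀, rfl⟩ := hm
    rw [Finset.sum_eq_single i₀]
    · simp [coeff_C_mul, coeff_X']
    · intro b _ hb
      have : ¬ (Finsupp.single b 1 = Finsupp.single i₀ 1) := by
        intro hcon
        exact hb (by
          have := Finsupp.single_left_injective (one_ne_zero (α := ℕ)) hcon
          exact this)
      simp [coeff_C_mul, coeff_X', this]
    · intro h; exact absurd (Finset.mem_univ i₀) h
  · have hdeg : m.degree ≠ 1 := fun hd => hm (degree_one_single hd)
    rw [hL.coeff_eq_zero hdeg]
    apply (Finset.sum_eq_zero ?_).symm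
    intro i _
    have : ¬ (Finsupp.single i 1 = m) := fun hc => hm ⟨i, hc.symm⟩
    simp [coeff_C_mul, coeff_X', this]

private lemma eval_linear {K σ : Type*} [CommSemiring K] [Fintype σ] [DecidableEq σ]
    {L : MvPolynomial σ K} (hL : L.IsHomogeneous 1) (v : σ → K) :
    eval v L = ∑ i, L.coeff (Finsupp.single i 1) * v i := by
  conv_lhs => rw [linear_form_eq hL]
  simp

private lemma exists_coeff_ne_zero {K σ : Type*} [CommSemiring K] [Fintype σ] [DecidableEq σ]
    {L : MvPolynomial σ K} (hL : L.IsHomogeneous 1) (hL0 : L ≠ 0) :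
    ∃ j, L.coeff (Finsupp.single j 1) ≠ 0 := by
  by_contra h
  push_neg at h
  apply hL0
  rw [linear_form_eq hL]
  simp [h]

private lemma eval_smul_linear {K σ : Type*} [CommSemiring K] [Fintype σ] [DecidableEq σ]
    {L : MvPolynomial σ K} (hL : L.IsHomogeneous 1) (c : K) (v : σ → K) :
    eval (c • v) L = c * eval v L := by
  rw [eval_linear hL, eval_linear hL, Finset.mul_sum]
  apply Finset.sum_congr rfl
  intro i _
  simp [Pi.smul_apply, smul_eq_mul]
  ring
private lemma bind1_monomial_zero_var {K : Type*} [CommSemiring K] {σ : Type*} [DecidableEq σ]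
    (j : σ) (m : σ →₀ ℕ) (c : K) :
    bind₁ (fun i => if i = j then (0 : MvPolynomial σ K) else X i) (monomial m c)
      = if m j = 0 then monomial m c else 0 := by
  rw [bind₁_monomial]
  split_ifs with h
  · have hj : j ∉ m.support := by simp [Finsupp.mem_support_iff, h]
    rw [Finset.prod_congr rfl (fun i hi => ?_), monomial_eq]
    · rfl
    · rw [if_neg (by rintro rfl; exact hj hi)]
  · have hj : j ∈ m.support := Finsupp.mem_support_iff.mpr h
    rw [Finset.prod_eq_zero hj (by simp [zero_pow h]), mul_zero]

private lemma X_dvd_of_vanish {K : Type*} [CommRing K] [IsDomain K] [Infinite K]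
    {σ : Type*} [DecidableEq σ] {P : MvPolynomial σ K} (j : σ)
    (h : ∀ v : σ → K, v j = 0 → eval v P = 0) : X j ∣ P := by
  set f : σ → MvPolynomial σ K := fun i => if i = j then 0 else X i with hf
  have hZ : bind₁ f P = 0 := by
    apply MvPolynomial.funext
    intro v
    rw [map_zero, eval_bind1]
    apply h
    simp [hf]
  have hcoeff : ∀ m : σ →₀ ℕ, m j = 0 → coeff m P = 0 := by
    intro m hm
    have h1 : coeff m (bind₁ f P) = coeff m P := by
      conv_lhs => rw [P.as_sum, map_sum]
      rw [coeff_sum, Finset.sum_congr rfl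
        (fun m' _ => by rw [hf, bind1_monomial_zero_var]), Finset.sum_eq_single m]
      · rw [if_pos hm, coeff_monomial, if_pos rfl]
      · intro m' _ hm'
        split_ifs
        · rw [coeff_monomial, if_neg hm']
        · exact coeff_zero m
      · intro hmm
        rw [if_pos hm, coeff_monomial, if_pos rfl]
        exact notMem_support_iff.mp hmm
    rw [← h1, hZ, coeff_zero]
  conv_rhs => rw [P.as_sum]
  apply Finset.dvd_sum
  intro m hmem
  rw [X_dvd_monomial]
  right
  intro hmj
  exact (mem_support_iff.mp hmem) (hcoeff m hmj)

section S3
variable {K : Type*} {σ : Type*} [Fintype σ] [DecidableEq σ]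

private lemma eval_update_linear [CommRing K] {L : MvPolynomial σ K}
    (hL : L.IsHomogeneous 1) (v : σ → K) (j : σ) (t : K) :
    eval (Function.update v j t) L
      = eval v L + L.coeff (Finsupp.single j 1) * (t - v j) := by
  rw [eval_linear hL, eval_linear hL]
  have e1 := Finset.add_sum_erase Finset.univ
    (fun i => L.coeff (Finsupp.single i 1) * Function.update v j t i) (Finset.mem_univ j)
  have e2 := Finset.add_sum_erase Finset.univ
    (fun i => L.coeff (Finsupp.single i 1) * v i) (Finset.mem_univ j)
  rw [← e1, ← e2]
  simp only [Function.update_self]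
  have e3 : ∑ i ∈ Finset.univ.erase j, L.coeff (Finsupp.single i 1) * Function.update v j t i
      = ∑ i ∈ Finset.univ.erase j, L.coeff (Finsupp.single i 1) * v i :=
    Finset.sum_congr rfl fun i hi => by rw [Function.update_of_ne (Finset.ne_of_mem_erase hi)]
  rw [e3]; ring

private lemma linear_dvd_of_vanish [Field K] [Infinite K]
    {L : MvPolynomial σ K} (hL : L.IsHomogeneous 1) (hL0 : L ≠ 0)
    {P : MvPolynomial σ K}
    (hvan : ∀ v : σ → K, eval v L = 0 → eval v P = 0) : L ∣ P := by
  obtain ⟨j, ha⟩ := exists_coeff_ne_zero hL hL0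
  set a := L.coeff (Finsupp.single j 1) with haa
  set F : σ → MvPolynomial σ K :=
    fun i => if i = j then C a⁻¹ * (X j - L + C a * X j) else X i with hF
  set G : σ → MvPolynomial σ K := fun i => if i = j then L else X i with hG
  have hFj : F j = C a⁻¹ * (X j - L + C a * X j) := by simp [hF]
  have hFne : ∀ i, i ≠ j → F i = X i := fun i hij => by simp [hF, hij]
  have hGj : G j = L := by simp [hG]
  have hGne : ∀ i, i ≠ j → G i = X i := fun i hij => by simp [hG, hij]
  have hFhom : ∀ i, (F i).IsHomogeneous 1 := by
    intro i
    rcases eq_or_ne i j with rfl | hij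
    · rw [hFj]
      exact (((isHomogeneous_X _ _).sub hL).add ((isHomogeneous_X _ _).C_mul a)).C_mul a⁻¹
    · rw [hFne i hij]; exact isHomogeneous_X _ _
  have hGhom : ∀ i, (G i).IsHomogeneous 1 := by
    intro i
    rcases eq_or_ne i j with rfl | hij
    · rw [hGj]; exact hL
    · rw [hGne i hij]; exact isHomogeneous_X _ _
  -- evaluation of F at a point
  have hFeval : ∀ v : σ → K, (fun i => eval v (F i))
      = Function.update v j (a⁻¹ * (v j - eval v L + a * v j)) := by
    intro v
    funext i
    rcases eq_or_ne i j with rfl | hij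
    · rw [hFj, Function.update_self]; simp
    · rw [hFne i hij, Function.update_of_ne hij, eval_X]
  have hGeval : ∀ v : σ → K, (fun i => eval v (G i)) = Function.update v j (eval v L) := by
    intro v
    funext i
    rcases eq_or_ne i j with rfl | hij
    · rw [hGj, Function.update_self]
    · rw [hGne i hij, Function.update_of_ne hij, eval_X]
  -- Claim 1 : bind₁ F L = X j
  have claim1 : bind₁ F L = X j := by
    have h1 : (bind₁ F L).IsHomogeneous 1 := by
      have := hL.aeval F hFhom
      rw [aeval_eq_bind₁] at this
      simpa using this
    apply MvPolynomial.IsHomogeneous.funext h1 (isHomogeneous_X _ _)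
    intro v
    rw [eval_bind1, hFeval v, eval_update_linear hL, eval_X, ← haa]
    field_simp
    ring
  -- Claim 2 : bind₁ G (F i) = X i
  have claim2 : ∀ i, bind₁ G (F i) = X i := by
    intro i
    rcases eq_or_ne i j with rfl | hij
    · have h1 : (bind₁ G (F i)).IsHomogeneous 1 := by
        have := (hFhom i).aeval G hGhom
        rw [aeval_eq_bind₁] at this
        simpa using this
      apply MvPolynomial.IsHomogeneous.funext h1 (isHomogeneous_X _ _)
      intro v
      rw [eval_bind1, hGeval v, eval_X]
      rw [hFj]
      simp only [eval_mul, eval_C, eval_add, eval_sub, eval_X, Function.update_self]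
      rw [eval_update_linear hL, ← haa]
      field_simp
      ring
    · rw [hFne i hij, bind₁_X_right, hGne i hij]
  have hPG : bind₁ G (bind₁ F P) = P := by
    rw [bind₁_bind₁]
    simp only [claim2]
    rw [show (fun i : σ => (X i : MvPolynomial σ K)) = X from rfl, bind₁_X_left]
    rfl
  have hXdvd : X j ∣ bind₁ F P := by
    apply X_dvd_of_vanish j
    intro v hv
    rw [eval_bind1]
    apply hvan
    have : eval (fun i => eval v (F i)) L = eval v (bind₁ F L) := (eval_bind1 v F L).symm
    rw [this, claim1, eval_X, hv]
  obtain ⟨Q', hQ'⟩ := hXdvd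
  refine ⟨bind₁ G Q', ?_⟩
  rw [← hPG, hQ', map_mul, bind₁_X_right, hGj]

end S3

private lemma degree_single {σ : Type*} (a : σ) (k : ℕ) :
    (Finsupp.single a k).degree = k := by
  rw [Finsupp.degree_apply]
  rcases eq_or_ne k 0 with rfl | hk
  · simp
  · rw [Finsupp.support_single_ne_zero a hk, Finset.sum_singleton, Finsupp.single_eq_same]

private lemma isHomogeneous_of_mul_linear {K : Type*} [Field K] {σ : Type*}
    {L Q : MvPolynomial σ K} (hL : L.IsHomogeneous 1) (hL0 : L ≠ 0) {d : ℕ} (hd : 1 ≤ d)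
    (hP : (L * Q).IsHomogeneous d) : Q.IsHomogeneous (d - 1) := by
  have key : ∀ e, e ≠ d - 1 → homogeneousComponent e Q = 0 := by
    intro e he
    by_cases hrange : e < Q.totalDegree + 1
    · have h1 : ∀ e', (L * homogeneousComponent e' Q).IsHomogeneous (1 + e') :=
        fun e' => hL.mul (homogeneousComponent_isHomogeneous e' Q)
    -- compute the (1+e)-component of L*Q in two ways
      have h2 : homogeneousComponent (1 + e) (L * Q) = L * homogeneousComponent e Q := by
        conv_lhs => rw [← sum_homogeneousComponent Q, Finset.mul_sum, map_sum]
        rw [Finset.sum_eq_single e]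
        · rw [homogeneousComponent_of_mem (h1 e), if_pos rfl]
        · intro e' _ hne
          rw [homogeneousComponent_of_mem (h1 e'), if_neg (by omega)]
        · intro habs; exact absurd (Finset.mem_range.mpr hrange) habs
      have h3 : homogeneousComponent (1 + e) (L * Q) = 0 := by
        rw [homogeneousComponent_of_mem hP, if_neg (by omega)]
      rcases mul_eq_zero.mp (h2.symm.trans h3) with h | h
      · exact absurd h hL0
      · exact h
    · exact homogeneousComponent_eq_zero e Q (by omega)
  have hQ : Q = homogeneousComponent (d - 1) Q := by
    conv_lhs => rw [← sum_homogeneousComponent Q]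
    by_cases hmem : d - 1 < Q.totalDegree + 1
    · rw [Finset.sum_eq_single (d - 1) (fun e _ hne => key e hne)
        (fun h => absurd (Finset.mem_range.mpr hmem) h)]
    · rw [Finset.sum_eq_zero (fun e he => key e (by
        have := Finset.mem_range.mp he; omega))]
      rw [homogeneousComponent_eq_zero (d - 1) Q (by omega)]
  rw [hQ]
  exact homogeneousComponent_isHomogeneous _ _

private lemma homog_zero_eq_zero {K σ : Type*} [CommSemiring K] {P : MvPolynomial σ K}
    (hP : P.IsHomogeneous 0) (v : σ → K) (h : eval v P = 0) : P = 0 := by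
  classical
  have hC : P = C (coeff 0 P) := by
    ext m
    rcases eq_or_ne m 0 with rfl | hm
    · simp
    · rw [hP.coeff_eq_zero (fun hc => hm ((Finsupp.degree_eq_zero_iff m).mp hc)), coeff_C,
        if_neg (fun hc => hm hc.symm)]
  rw [hC] at h ⊢
  rw [eval_C] at h
  rw [h, map_zero]

private lemma single_var_homog_eq_zero {K : Type*} [Field K] {d : ℕ} {P : MvPolynomial (Fin 1) K}
    (hP : P.IsHomogeneous d) {v : Fin 1 → K} (hv : v 0 ≠ 0) (h : eval v P = 0) : P = 0 := by
  have hmono : P = monomial (Finsupp.single 0 d) (coeff (Finsupp.single 0 d) P) := by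
    ext m
    have hm0 : m = Finsupp.single 0 (m 0) := Finsupp.ext fun i => by
      have hi : i = 0 := Subsingleton.elim i 0
      subst hi; simp
    rcases eq_or_ne m (Finsupp.single 0 d) with rfl | hm
    · rw [coeff_monomial, if_pos rfl]
    · rw [coeff_monomial, if_neg (fun hc => hm hc.symm)]
      by_contra hc
      have hdeg : m.degree = d := by
        by_contra hne
        exact hc (hP.coeff_eq_zero hne)
      rw [hm0, degree_single] at hdeg
      exact hm (by rw [hm0, hdeg])
  rw [hmono] at h ⊢
  rw [eval_monomial, Finsupp.prod_single_index (by rw [pow_zero])] at h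
  rcases mul_eq_zero.mp h with h1 | h1
  · rw [h1, monomial_zero]
  · exact absurd h1 (pow_ne_zero d hv)


section Main
variable {K : Type*} [Field K] [Infinite K]

private theorem cage_aux (N : ℕ) : ∀ (n d : ℕ), n + d ≤ N →
    ∀ (L : Fin n → Fin (d + 1) → MvPolynomial (Fin (n + 1)) K),
    (∀ j i, (L j i).IsHomogeneous 1) →
    ∀ (p : (Fin n → Fin (d + 1)) → Fin (n + 1) → K),
    (∀ I, p I ≠ 0) →
    (∀ I : Fin n → Fin (d + 1), LinearIndependent K fun j => L j (I j)) →
    (∀ (I : Fin n → Fin (d + 1)) (v : Fin (n + 1) → K),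
      (∀ j, MvPolynomial.eval v (L j (I j)) = 0) ↔ ∃ c : K, v = c • p I) →
    (∀ (j : Fin n) (i : Fin (d + 1)) (I : Fin n → Fin (d + 1)),
      i ≠ I j → MvPolynomial.eval (p I) (L j i) ≠ 0) →
    ∀ (P : MvPolynomial (Fin (n + 1)) K), P.IsHomogeneous d →
    (∀ I : Fin n → Fin (d + 1), (∑ j, (I j : ℕ)) ≤ d →
      MvPolynomial.eval (p I) P = 0) →
    P = 0 := by
  induction N with
  | zero =>
    intro n d hnd L hL p hp0 hind hline hne P hP hvan
    have hd0 : d = 0 := by omega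
    subst hd0
    exact homog_zero_eq_zero hP (p fun _ => 0) (hvan (fun _ => 0) (by simp))
  | succ N ih =>
    intro n d hnd L hL p hp0 hind hline hne P hP hvan
    rcases d with _ | e
    · -- degree 0
      exact homog_zero_eq_zero hP (p fun _ => 0) (hvan (fun _ => 0) (by simp))
    rcases n with _ | m
    · -- no colors : one variable
      have hvan0 := hvan (fun j => j.elim0) (by simp)
      have hp00 : p (fun j => j.elim0) 0 ≠ 0 := by
        intro h0
        apply hp0 (fun j => j.elim0)
        funext i
        have hi : i = 0 := by omega
        rw [hi]
        exact h0
      exact single_var_homog_eq_zero hP hp00 hvan0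
    -- main case : n = m + 1, d = e + 1
    -- the distinguished linear form
    have hL00ne : L 0 0 ≠ 0 := (hind fun _ => 0).ne_zero 0
    obtain ⟨j, ha⟩ := exists_coeff_ne_zero (hL 0 0) hL00ne
    set a := (L 0 0).coeff (Finsupp.single j 1) with haa
    -- the substitution onto the hyperplane L 0 0 = 0
    set Pj : MvPolynomial (Fin (m + 1)) K :=
      C (-a⁻¹) * ∑ k : Fin (m + 1),
        C ((L 0 0).coeff (Finsupp.single (j.succAbove k) 1)) * X k with hPj
    set Φ : Fin (m + 2) → MvPolynomial (Fin (m + 1)) K := j.insertNth Pj X with hΦ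
    set φ : (Fin (m + 1) → K) → (Fin (m + 2) → K) := fun v i => eval v (Φ i) with hφ
    have hΦj : Φ j = Pj := by
      rw [hΦ, Fin.insertNth_apply_same]
    have hΦsA : ∀ k, Φ (j.succAbove k) = X k := by
      intro k
      rw [hΦ, Fin.insertNth_apply_succAbove]
    have hΦhom : ∀ i, (Φ i).IsHomogeneous 1 := by
      intro i
      rcases eq_or_ne i j with rfl | hij
      · rw [hΦj, hPj]
        have : (∑ k : Fin (m + 1),
            C ((L 0 0).coeff (Finsupp.single (i.succAbove k) 1)) * X k :
            MvPolynomial (Fin (m+1)) K).IsHomogeneous 1 :=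
          IsHomogeneous.sum _ _ _ fun k _ => (isHomogeneous_X _ _).C_mul _
        exact this.C_mul _
      · obtain ⟨k, hk⟩ := Fin.exists_succAbove_eq hij
        rw [← hk, hΦsA]
        exact isHomogeneous_X _ _
    have hφsA : ∀ (v : Fin (m + 1) → K) k, φ v (j.succAbove k) = v k := by
      intro v k
      show eval v (Φ (j.succAbove k)) = v k
      rw [hΦsA, eval_X]
    have hφbind : ∀ (v : Fin (m + 1) → K) (R : MvPolynomial (Fin (m + 2)) K),
        eval v (bind₁ Φ R) = eval (φ v) R := by
      intro v R; rw [eval_bind1]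
    have hℓφ : ∀ v : Fin (m + 1) → K, eval (φ v) (L 0 0) = 0 := by
      intro v
      rw [eval_linear (hL 0 0), Fin.sum_univ_succAbove _ j]
      have h1 : φ v j = eval v Pj := by
        show eval v (Φ j) = _
        rw [hΦj]
      have h2 : eval v Pj = -a⁻¹ *
          ∑ k, (L 0 0).coeff (Finsupp.single (j.succAbove k) 1) * v k := by
        rw [hPj]
        simp
      rw [h1, h2, ← haa]
      simp only [hφsA]
      field_simp
      ring
    have hφsurj : ∀ u : Fin (m + 2) → K, eval u (L 0 0) = 0 → φ (u ∘ j.succAbove) = u := by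
      intro u hu
      funext i
      rcases eq_or_ne i j with hij | hij
      · subst hij
        have hS : ∑ k, (L 0 0).coeff (Finsupp.single (i.succAbove k) 1) * u (i.succAbove k)
            = -(a * u i) := by
          have h3 := eval_linear (hL 0 0) u
          rw [Fin.sum_univ_succAbove _ i, ← haa, hu] at h3
          linear_combination -h3
        show eval (u ∘ i.succAbove) (Φ i) = u i
        rw [hΦj, hPj]
        simp only [eval_mul, eval_C, map_sum, eval_X, Function.comp_apply]
        rw [hS]
        field_simp
      · obtain ⟨k, hk⟩ := Fin.exists_succAbove_eq hij
        rw [← hk]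
        exact hφsA _ k
    have hφsmul : ∀ (c : K) (v : Fin (m + 1) → K), φ (c • v) = c • φ v := by
      intro c v
      funext i
      rw [hφ]
      exact eval_smul_linear (hΦhom i) c v
    have hφzero : φ 0 = 0 := by
      have := hφsmul 0 0
      rw [zero_smul, zero_smul] at this
      exact this
    -- restricted cage on the hyperplane
    set L' : Fin m → Fin (e + 1 + 1) → MvPolynomial (Fin (m + 1)) K :=
      fun j' i => bind₁ Φ (L j'.succ i) with hL'
    set p' : (Fin m → Fin (e + 1 + 1)) → Fin (m + 1) → K :=
      fun I' => (p (Fin.cons 0 I')) ∘ j.succAbove with hp'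
    have hnode : ∀ I : Fin (m + 1) → Fin (e + 1 + 1), ∀ jj,
        eval (p I) (L jj (I jj)) = 0 :=
      fun I => (hline I (p I)).mpr ⟨1, (one_smul K (p I)).symm⟩
    have hkey : ∀ I' : Fin m → Fin (e + 1 + 1), φ (p' I') = p (Fin.cons 0 I') := by
      intro I'
      apply hφsurj
      have := hnode (Fin.cons 0 I') 0
      rwa [Fin.cons_zero] at this
    have hL'hom : ∀ j' i, (L' j' i).IsHomogeneous 1 := by
      intro j' i
      rw [hL', ← aeval_eq_bind₁]
      have := (hL j'.succ i).aeval Φ hΦhom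
      rwa [one_mul] at this
    have hp0' : ∀ I', p' I' ≠ 0 := by
      intro I' h0
      apply hp0 (Fin.cons 0 I')
      rw [← hkey I', h0, hφzero]
    have hind' : ∀ I' : Fin m → Fin (e + 1 + 1), LinearIndependent K fun j' => L' j' (I' j') := by
      intro I'
      rw [Fintype.linearIndependent_iff]
      intro g hg
      simp only [hL'] at hg
      set T : MvPolynomial (Fin (m + 2)) K := ∑ j', g j' • L j'.succ (I' j') with hT
      have hThom : T.IsHomogeneous 1 := by
        rw [hT]
        apply IsHomogeneous.sum
        intro j' _
        rw [smul_eq_C_mul]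
        exact (hL j'.succ (I' j')).C_mul _
      have hTbind : bind₁ Φ T = 0 := by
        rw [hT, map_sum]
        simp only [map_smul]
        exact hg
      have hTvanKer : ∀ u : Fin (m + 2) → K, eval u (L 0 0) = 0 → eval u T = 0 := by
        intro u hu
        rw [← hφsurj u hu, ← hφbind, hTbind, map_zero]
      set t := T.coeff (Finsupp.single j 1) * a⁻¹ with ht
      set T₂ := T - C t * L 0 0 with hT₂
      have hT₂hom : T₂.IsHomogeneous 1 := hThom.sub ((hL 0 0).C_mul t)
      have hT₂coeff : T₂.coeff (Finsupp.single j 1) = 0 := by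
        rw [hT₂, coeff_sub, coeff_C_mul, ← haa, ht]
        field_simp
        simp
      have hT₂van : ∀ u, eval u (L 0 0) = 0 → eval u T₂ = 0 := by
        intro u hu
        rw [hT₂, map_sub, eval_mul, eval_C, hTvanKer u hu, hu]
        ring
      have hT₂zero : T₂ = 0 := by
        apply hT₂hom.eq_zero_of_forall_eval_eq_zero
        intro v
        have hu : eval (Function.update v j (v j - eval v (L 0 0) * a⁻¹)) (L 0 0) = 0 := by
          rw [eval_update_linear (hL 0 0), ← haa]
          field_simp
          ring
        have h2 := hT₂van _ hu
        rw [eval_update_linear hT₂hom, hT₂coeff, zero_mul, add_zero] at h2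
        exact h2
      have hTeq : T = C t * L 0 0 := by
        apply sub_eq_zero.mp
        rw [← hT₂]
        exact hT₂zero
      have hcons : ∑ jj : Fin (m + 1),
          (Fin.cons (-t) g : Fin (m + 1) → K) jj
            • L jj ((Fin.cons 0 I' : Fin (m + 1) → Fin (e + 1 + 1)) jj) = 0 := by
        rw [Fin.sum_univ_succ]
        simp only [Fin.cons_zero, Fin.cons_succ]
        rw [← hT, hTeq, neg_smul, smul_eq_C_mul]
        ring
      have hall0 := Fintype.linearIndependent_iff.mp (hind (Fin.cons 0 I'))
        (Fin.cons (-t) g) hcons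
      intro j'
      have hfin := hall0 j'.succ
      rwa [Fin.cons_succ] at hfin
    have hline' : ∀ (I' : Fin m → Fin (e + 1 + 1)) (v : Fin (m + 1) → K),
        (∀ j', eval v (L' j' (I' j')) = 0) ↔ ∃ c : K, v = c • p' I' := by
      intro I' v
      constructor
      · intro hall
        have hall2 : ∀ jj : Fin (m + 1),
            eval (φ v) (L jj ((Fin.cons 0 I' : Fin (m + 1) → Fin (e + 1 + 1)) jj)) = 0 := by
          intro jj
          refine Fin.cases ?_ ?_ jj
          · rw [Fin.cons_zero]
            exact hℓφ v
          · intro k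
            rw [Fin.cons_succ]
            have hk := hall k
            simp only [hL'] at hk
            rwa [hφbind] at hk
        obtain ⟨c, hc⟩ := (hline (Fin.cons 0 I') (φ v)).mp hall2
        refine ⟨c, ?_⟩
        have h2 : φ v = φ (c • p' I') := by
          rw [hφsmul, hkey]
          exact hc
        funext k
        have h3 := congrFun h2 (j.succAbove k)
        rw [hφsA, hφsA] at h3
        exact h3
      · rintro ⟨c, rfl⟩
        intro j'
        simp only [hL']
        rw [hφbind, hφsmul, hkey]
        have h4 := (hline (Fin.cons 0 I') (c • p (Fin.cons 0 I'))).mpr ⟨c, rfl⟩ j'.succ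
        rwa [Fin.cons_succ] at h4
    have hne' : ∀ (j' : Fin m) (i : Fin (e + 1 + 1)) (I' : Fin m → Fin (e + 1 + 1)),
        i ≠ I' j' → eval (p' I') (L' j' i) ≠ 0 := by
      intro j' i I' hi
      rw [hL', hφbind, hkey]
      exact hne j'.succ i (Fin.cons 0 I') (by rwa [Fin.cons_succ])
    have hP1hom : (bind₁ Φ P).IsHomogeneous (e + 1) := by
      rw [← aeval_eq_bind₁]
      have := hP.aeval Φ hΦhom
      rwa [one_mul] at this
    have hvan1 : ∀ I' : Fin m → Fin (e + 1 + 1), (∑ j', (I' j' : ℕ)) ≤ e + 1 →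
        eval (p' I') (bind₁ Φ P) = 0 := by
      intro I' hsum
      rw [hφbind, hkey]
      apply hvan (Fin.cons 0 I')
      rw [Fin.sum_univ_succ, Fin.cons_zero]
      simpa using hsum
    have hP1 : bind₁ Φ P = 0 :=
      ih m (e + 1) (by omega) L' hL'hom p' hp0' hind' hline' hne' (bind₁ Φ P) hP1hom hvan1
    -- P vanishes on the hyperplane, hence L 0 0 divides P
    have hvanP : ∀ u : Fin (m + 2) → K, eval u (L 0 0) = 0 → eval u P = 0 := by
      intro u hu
      rw [← hφsurj u hu, ← hφbind, hP1, map_zero]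
    obtain ⟨Q, hQ⟩ := linear_dvd_of_vanish (hL 0 0) hL00ne hvanP
    have hQhom : Q.IsHomogeneous e := by
      have := isHomogeneous_of_mul_linear (hL 0 0) hL00ne (by omega : 1 ≤ e + 1) (hQ ▸ hP)
      simpa using this
    -- the smaller cage for Q
    set emb : Fin (m + 1) → Fin (e + 1) → Fin (e + 2) :=
      fun jj i => if jj = 0 then i.succ else i.castSucc with hemb
    have hembinj : ∀ jj, Function.Injective (emb jj) := by
      intro jj x y hxy
      have hxy' : (if jj = 0 then x.succ else x.castSucc)
          = (if jj = 0 then y.succ else y.castSucc) := hxy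
      by_cases h0 : jj = 0
      · rw [if_pos h0, if_pos h0] at hxy'; exact Fin.succ_injective _ hxy'
      · rw [if_neg h0, if_neg h0] at hxy'; exact Fin.castSucc_injective _ hxy'
    have hQ0 : Q = 0 := by
      apply ih (m + 1) e (by omega) (fun jj i => L jj (emb jj i)) (fun jj i => hL jj _)
        (fun I => p (fun jj => emb jj (I jj))) (fun I => hp0 _)
        (fun I => hind _) (fun I v => hline _ v)
        (fun jj i I hi => hne jj _ _ (fun hc => hi (hembinj jj hc))) Q hQhom
      -- vanishing
      intro I hsum
      have hsum2 : (∑ jj, ((fun jj => emb jj (I jj)) jj : ℕ)) ≤ e + 1 := by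
        have he1 : ((emb 0 (I 0) : Fin (e + 2)) : ℕ) = (I 0 : ℕ) + 1 := by
          simp [hemb]
        have he2 : ∀ k : Fin m, ((emb k.succ (I k.succ) : Fin (e + 2)) : ℕ)
            = (I k.succ : ℕ) := by
          intro k
          simp [hemb, Fin.succ_ne_zero]
        rw [Fin.sum_univ_succ] at hsum ⊢
        simp only [he1, he2]
        omega
      have h1 := hvan _ hsum2
      rw [hQ, map_mul] at h1
      have h2 : eval (p fun jj => emb jj (I jj)) (L 0 0) ≠ 0 := by
        apply hne 0 0
        rw [hemb]
        simp only [if_pos rfl]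
        exact (Fin.succ_ne_zero (I 0)).symm
      exact (mul_eq_zero.mp h1).resolve_left h2
    rw [hQ, hQ0, mul_zero]

end Main

/-- No nonzero homogeneous polynomial of degree `d` vanishes on a simplicial set
of nodes of a `(d+1)^{n}`-cage. -/
theorem vanish_on_simplicial_of_larger_cage_implies_zero
    {K : Type*} [Field K] [Infinite K] (n d : ℕ) (hn : 1 ≤ n) (hd : 1 ≤ d)
    (L : Fin n → Fin (d + 1) → MvPolynomial (Fin (n + 1)) K)
    (hL : ∀ j i, (L j i).IsHomogeneous 1)
    (p : (Fin n → Fin (d + 1)) → Fin (n + 1) → K)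
    (hp0 : ∀ I, p I ≠ 0)
    (hind : ∀ I : Fin n → Fin (d + 1), LinearIndependent K fun j => L j (I j))
    (hline : ∀ (I : Fin n → Fin (d + 1)) (v : Fin (n + 1) → K),
      (∀ j, MvPolynomial.eval v (L j (I j)) = 0) ↔ ∃ c : K, v = c • p I)
    (hne : ∀ (j : Fin n) (i : Fin (d + 1)) (I : Fin n → Fin (d + 1)),
      i ≠ I j → MvPolynomial.eval (p I) (L j i) ≠ 0)
    (P : MvPolynomial (Fin (n + 1)) K) (hP : P.IsHomogeneous d)
    (hvan : ∀ I : Fin n → Fin (d + 1), (∑ j, (I j : ℕ)) ≤ d →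
      MvPolynomial.eval (p I) P = 0) :
    P = 0 := by
  exact cage_aux (n + d) n d le_rfl L hL p hp0 hind hline hne P hP hvan
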